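/- For every nonnegative integer n, E_n(x) = n! ∑_{k=0}^{n} ( (k+1)/2^k ∑_{0 ≤ l ≤ n-k, l even} E_{n-k-l} / (2^l (n-k-l)! ((2k+l+2)/2)! (l/2)!) ) U_k(x). -/

import Mathlib

open Polynomial Nat

/-- The Euler polynomials `E n`, defined by the recurrence
`E n + ∑_{k ≤ n} C(n,k) E k = 2 xⁿ`, equivalent to the generating function
`2 e^{xt}/(e^t + 1) = ∑ E n (x) tⁿ/n!`. -/
noncomputable def eulerPoly : ℕ → ℚ[X]
  | n => X ^ n - C (1 / 2) * ∑ k : Fin n, C ((n.choose k : ℚ)) * eulerPoly k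
decreasing_by exact k.isLt

noncomputable def E0 (n : ℕ) : ℚ := (eulerPoly n).eval 0

lemma eulerPoly_def' (n : ℕ) :
    eulerPoly n = X ^ n - C (1/2) * ∑ k ∈ Finset.range n, C ((n.choose k : ℚ)) * eulerPoly k := by
  rw [eulerPoly]
  congr 2
  exact (Finset.sum_range fun k => C ((n.choose k : ℚ)) * eulerPoly k).symm

lemma E0_zero : E0 0 = 1 := by
  rw [E0, eulerPoly_def']
  simp

lemma E0_rec (n : ℕ) (hn : 0 < n) :
    ∑ k ∈ Finset.range n, (n.choose k : ℚ) * E0 k = -2 * E0 n := by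
  have h := congrArg (Polynomial.eval 0) (eulerPoly_def' n)
  simp only [E0, Polynomial.eval_sub, Polynomial.eval_pow, Polynomial.eval_X,
    Polynomial.eval_mul, Polynomial.eval_C, Polynomial.eval_finset_sum,
    zero_pow hn.ne'] at h ⊢
  rw [h]
  ring

lemma eulerInner (n m : ℕ) (hm : m < n) :
    ∑ k ∈ Finset.range n, (n.choose k : ℚ) * (k.choose m : ℚ) * E0 (k - m)
      = -2 * ((n.choose m : ℚ) * E0 (n - m)) := by
  have hsub : Finset.Ico m n ⊆ Finset.range n := by
    rw [Finset.range_eq_Ico]; exact Finset.Ico_subset_Ico (Nat.zero_le m) le_rfl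
  rw [← Finset.sum_subset hsub (by
    intro k hk hk2
    rw [Finset.mem_range] at hk
    rw [Finset.mem_Ico, not_and_or] at hk2
    have hkm : k < m := by omega
    rw [Nat.choose_eq_zero_of_lt hkm]
    simp)]
  rw [Finset.sum_Ico_eq_sum_range]
  have key : ∀ i ∈ Finset.range (n - m),
      (n.choose (m + i) : ℚ) * ((m + i).choose m : ℚ) * E0 (m + i - m)
        = (n.choose m : ℚ) * ((n - m).choose i : ℚ) * E0 i := by
    intro i hi
    rw [Finset.mem_range] at hi
    have h := Nat.choose_mul (n := n) (show m ≤ m + i by omega)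
    have h2 : m + i - m = i := by omega
    rw [h2]
    have : (n.choose (m + i) : ℚ) * ((m + i).choose m : ℚ)
        = (n.choose m : ℚ) * ((n - m).choose i : ℚ) := by
      have := congrArg (fun x : ℕ => (x : ℚ)) h
      push_cast at this
      simpa [h2] using this
    rw [this]
  rw [Finset.sum_congr rfl key]
  have := E0_rec (n - m) (by omega)
  calc ∑ i ∈ Finset.range (n - m), (n.choose m : ℚ) * ((n - m).choose i : ℚ) * E0 i
      = (n.choose m : ℚ) * ∑ i ∈ Finset.range (n - m), ((n - m).choose i : ℚ) * E0 i := by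
        rw [Finset.mul_sum]; exact Finset.sum_congr rfl fun i _ => by ring
    _ = _ := by rw [this]; ring

lemma eulerPoly_eq_sum (n : ℕ) :
    eulerPoly n = ∑ m ∈ Finset.range (n+1), C ((n.choose m : ℚ) * E0 (n - m)) * X ^ m := by
  induction n using Nat.strong_induction_on with
  | _ n ih =>
  rw [eulerPoly_def']
  have h1 : ∀ k ∈ Finset.range n, C ((n.choose k : ℚ)) * eulerPoly k
      = ∑ m ∈ Finset.range (n+1),
          C ((n.choose k : ℚ) * ((k.choose m : ℚ) * E0 (k - m))) * X ^ m := by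
    intro k hk
    rw [Finset.mem_range] at hk
    rw [ih k hk, Finset.mul_sum]
    rw [← Finset.sum_subset (Finset.range_subset_range.mpr (by omega : k+1 ≤ n+1))]
    · exact Finset.sum_congr rfl fun m hm => by simp only [C_mul]; ring
    · intro m hm hmk
      rw [Finset.mem_range] at hm hmk
      have : k.choose m = 0 := Nat.choose_eq_zero_of_lt (by omega)
      simp [this]
  rw [Finset.sum_congr rfl h1, Finset.sum_comm]
  have h2 : ∀ m ∈ Finset.range (n+1),
      ∑ k ∈ Finset.range n, C ((n.choose k : ℚ) * ((k.choose m : ℚ) * E0 (k - m))) * X ^ m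
        = (if m < n then C (-2 * ((n.choose m : ℚ) * E0 (n - m))) * X ^ m else 0) := by
    intro m hm
    rw [← Finset.sum_mul, ← map_sum]
    by_cases hmn : m < n
    · rw [if_pos hmn, ← eulerInner n m hmn]
      congr 2
      exact Finset.sum_congr rfl fun k _ => by ring
    · rw [if_neg hmn]
      have : ∀ k ∈ Finset.range n, (n.choose k : ℚ) * ((k.choose m : ℚ) * E0 (k - m)) = 0 := by
        intro k hk
        rw [Finset.mem_range] at hk
        rw [Nat.choose_eq_zero_of_lt (show k < m by omega)]
        push_cast
        ring
      rw [Finset.sum_congr rfl this]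
      simp
  rw [Finset.sum_congr rfl h2, Finset.sum_range_succ, if_neg (lt_irrefl n), add_zero,
    Finset.sum_congr rfl (fun x hx => if_pos (Finset.mem_range.mp hx)),
    Finset.sum_range_succ (f := fun m => C ((n.choose m : ℚ) * E0 (n - m)) * X ^ m),
    Nat.choose_self, Nat.sub_self, E0_zero, Finset.mul_sum]
  have h3 : ∀ m ∈ Finset.range n,
      C (1/2 : ℚ) * (C (-2 * ((n.choose m : ℚ) * E0 (n - m))) * X ^ m)
        = -(C ((n.choose m : ℚ) * E0 (n - m)) * X ^ m) := by
    intro m _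
    rw [← mul_assoc, ← C_mul,
      show (1/2 : ℚ) * (-2 * ((n.choose m : ℚ) * E0 (n - m)))
        = -((n.choose m : ℚ) * E0 (n - m)) by ring, map_neg, neg_mul]
  rw [Finset.sum_congr rfl h3, Finset.sum_neg_distrib, sub_neg_eq_add,
    show ((1:ℕ) : ℚ) * 1 = 1 by norm_num, map_one, one_mul, add_comm]

noncomputable def w (m k : ℕ) : ℚ :=
  if k ≤ m ∧ Even (m - k) then
    (m ! : ℚ) * ((k : ℚ) + 1) / (2 ^ m * (((m - k) / 2)! : ℚ) * (((m + k + 2) / 2)! : ℚ))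
  else 0

lemma w_eq (k a : ℕ) : w (k + 2 * a) k
    = ((k + 2 * a)! : ℚ) * ((k : ℚ) + 1) / (2 ^ (k + 2 * a) * (a ! : ℚ) * ((k + a + 1)! : ℚ)) := by
  rw [w, if_pos ⟨by omega, ⟨a, by omega⟩⟩,
    show (k + 2 * a - k) / 2 = a by omega,
    show (k + 2 * a + k + 2) / 2 = k + a + 1 by omega]

lemma w_eq_zero {m k : ℕ} (h : ¬(k ≤ m ∧ Even (m - k))) : w m k = 0 := if_neg h

lemma w_succ (m k : ℕ) (hk : k ≤ m) : w (m + 1) (k + 1) = (w m k + w m (k + 2)) / 2 := by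
  rcases Nat.even_or_odd (m - k) with ⟨a, ha⟩ | ⟨r, hr⟩
  · -- m = k + 2a
    have hm : m = k + 2 * a := by omega
    subst hm
    rcases a with _ | a'
    · -- a = 0, m = k
      have h2 : w (k + 2 * 0) (k + 2) = 0 := w_eq_zero (by omega)
      rw [h2, add_zero]
      have e1 : k + 2 * 0 + 1 = (k + 1) + 2 * 0 := by ring
      rw [e1, w_eq (k + 1) 0, w_eq k 0]
      have hf : ((k + 1 + 0 + 1)! : ℚ) = ((k + 0 + 1 : ℕ) + 1) * ((k + 0 + 1)! : ℚ) := by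
        rw [show k + 1 + 0 + 1 = (k + 0 + 1) + 1 by ring, Nat.factorial_succ]; push_cast; ring
      rw [hf]
      have hp : ((k + 0 + 1)! : ℚ) ≠ 0 := by positivity
      have hp2 : (2 : ℚ) ^ (k + 2 * 0) ≠ 0 := by positivity
      rw [show k + 1 + 2 * 0 = (k + 2 * 0) + 1 by ring, Nat.factorial_succ, pow_succ]
      push_cast
      field_simp
      ring
    · -- a = a' + 1
      have e1 : k + 2 * (a' + 1) + 1 = (k + 1) + 2 * (a' + 1) := by ring
      have e2 : k + 2 * (a' + 1) = (k + 2) + 2 * a' := by ring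
      rw [e1, w_eq (k + 1) (a' + 1), w_eq k (a' + 1), e2, w_eq (k + 2) a']
      have f1 : (((k + 1) + (a' + 1) + 1)! : ℚ) = ((k + a' + 2 : ℕ) + 1) * ((k + (a' + 1) + 1)! : ℚ) := by
        rw [show (k + 1) + (a' + 1) + 1 = (k + (a' + 1) + 1) + 1 by ring, Nat.factorial_succ]
        push_cast; ring
      have f2 : (((k + 2) + a' + 1)! : ℚ) = ((k + a' + 2 : ℕ) + 1) * ((k + (a' + 1) + 1)! : ℚ) := by
        rw [show (k + 2) + a' + 1 = (k + (a' + 1) + 1) + 1 by ring, Nat.factorial_succ]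
        push_cast; ring
      have f3 : ((a' + 1)! : ℚ) = ((a' : ℚ) + 1) * (a' ! : ℚ) := by
        rw [Nat.factorial_succ]; push_cast; ring
      have f4 : (((k + 1) + 2 * (a' + 1))! : ℚ)
          = ((k + 2 * (a' + 1) : ℕ) + 1) * (((k + 2) + 2 * a')! : ℚ) := by
        rw [show (k + 1) + 2 * (a' + 1) = (k + 2 * (a' + 1)) + 1 by ring, Nat.factorial_succ,
          show k + 2 * (a' + 1) = (k + 2) + 2 * a' by ring]
        push_cast; ring
      rw [f1, f2, f3, f4]
      have p1 : ((k + (a' + 1) + 1)! : ℚ) ≠ 0 := by positivity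
      have p2 : (a' ! : ℚ) ≠ 0 := by positivity
      have p3 : (((k + 2) + 2 * a')! : ℚ) ≠ 0 := by positivity
      have p4 : ((k : ℚ) + (a' : ℚ) + 2 + 1) ≠ 0 := by positivity
      have p5 : ((a' : ℚ) + 1) ≠ 0 := by positivity
      rw [show (k + 1) + 2 * (a' + 1) = ((k + 2) + 2 * a') + 1 by ring, pow_succ]
      push_cast
      field_simp
      ring
  · -- m - k odd
    have h1 : w (m + 1) (k + 1) = 0 := w_eq_zero (by
      rintro ⟨-, b, hb⟩; omega)
    have h2 : w m k = 0 := w_eq_zero (by rintro ⟨-, b, hb⟩; omega)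
    have h3 : w m (k + 2) = 0 := w_eq_zero (by rintro ⟨h, b, hb⟩; omega)
    rw [h1, h2, h3]
    norm_num

lemma w_zero_succ (m : ℕ) : w (m + 1) 0 = w m 1 / 2 := by
  rcases Nat.even_or_odd m with ⟨c, hc⟩ | ⟨c, hc⟩
  · -- m even : both zero
    have h1 : w (m + 1) 0 = 0 := w_eq_zero (by rintro ⟨-, b, hb⟩; omega)
    have h2 : w m 1 = 0 := w_eq_zero (by rintro ⟨h, b, hb⟩; omega)
    rw [h1, h2]; norm_num
  · -- m = 2c+1
    have e1 : m + 1 = 0 + 2 * (c + 1) := by omega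
    have e2 : m = 1 + 2 * c := by omega
    rw [e1, w_eq 0 (c + 1), e2, w_eq 1 c]
    have f1 : ((0 + 2 * (c + 1))! : ℚ) = ((1 + 2 * c : ℕ) + 1) * ((1 + 2 * c)! : ℚ) := by
      rw [show 0 + 2 * (c + 1) = (1 + 2 * c) + 1 by ring, Nat.factorial_succ]; push_cast; ring
    have f2 : ((c + 1)! : ℚ) = ((c : ℚ) + 1) * (c ! : ℚ) := by
      rw [Nat.factorial_succ]; push_cast; ring
    have f3 : 0 + (c + 1) + 1 = 1 + c + 1 := by omega
    rw [f1, f2, f3]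
    have p1 : (c ! : ℚ) ≠ 0 := by positivity
    have p2 : ((1 + c + 1)! : ℚ) ≠ 0 := by positivity
    have p3 : ((c : ℚ) + 1) ≠ 0 := by positivity
    rw [show 0 + 2 * (c + 1) = (1 + 2 * c) + 1 by ring, pow_succ]
    push_cast
    field_simp
    ring

lemma X_mul_U (j : ℤ) : (X : ℚ[X]) * Polynomial.Chebyshev.U ℚ j
    = C (1/2 : ℚ) * (Polynomial.Chebyshev.U ℚ (j + 1) + Polynomial.Chebyshev.U ℚ (j - 1)) := by
  have h := Polynomial.Chebyshev.U_add_two ℚ (j - 1)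
  rw [show j - 1 + 2 = j + 1 by ring, show j - 1 + 1 = j by ring] at h
  have h2 : (2 : ℚ[X]) * (X * Polynomial.Chebyshev.U ℚ j)
      = Polynomial.Chebyshev.U ℚ (j + 1) + Polynomial.Chebyshev.U ℚ (j - 1) := by
    linear_combination -h
  rw [← h2, ← mul_assoc, show C (1/2 : ℚ) * (2 : ℚ[X]) = 1 by
    rw [show (2 : ℚ[X]) = C 2 from (map_ofNat C 2).symm, ← C_mul]; norm_num, one_mul]

lemma w_big {m k : ℕ} (h : m < k) : w m k = 0 := w_eq_zero (by omega)

lemma xpow_eq (m : ℕ) :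
    (X : ℚ[X]) ^ m = ∑ k ∈ Finset.range (m + 1), C (w m k) * Polynomial.Chebyshev.U ℚ (k : ℤ) := by
  induction m with
  | zero =>
    rw [Finset.sum_range_one]
    have : w 0 0 = 1 := by rw [show (0:ℕ) = 0 + 2 * 0 by ring, w_eq 0 0]; norm_num
    norm_num [this, Polynomial.Chebyshev.U_zero]
  | succ m ih =>
    have expand : (X : ℚ[X]) ^ (m + 1)
        = (∑ k ∈ Finset.range (m + 1), C (w m k / 2) * Polynomial.Chebyshev.U ℚ ((k : ℤ) + 1))
          + ∑ k ∈ Finset.range (m + 1), C (w m k / 2) * Polynomial.Chebyshev.U ℚ ((k : ℤ) - 1) := by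
      rw [pow_succ, ih, Finset.sum_mul, ← Finset.sum_add_distrib]
      refine Finset.sum_congr rfl fun k _ => ?_
      calc C (w m k) * Polynomial.Chebyshev.U ℚ (k : ℤ) * X
          = C (w m k) * (X * Polynomial.Chebyshev.U ℚ (k : ℤ)) := by ring
        _ = C (w m k) * (C (1/2 : ℚ) * (Polynomial.Chebyshev.U ℚ ((k : ℤ) + 1)
              + Polynomial.Chebyshev.U ℚ ((k : ℤ) - 1))) := by rw [X_mul_U]
        _ = _ := by
            rw [show w m k / 2 = w m k * (1/2) by ring, C_mul]; ring
    rw [expand]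
    -- massage S2
    have hS2 : (∑ k ∈ Finset.range (m + 1), C (w m k / 2) * Polynomial.Chebyshev.U ℚ ((k : ℤ) - 1))
        = (∑ k ∈ Finset.range (m + 1), C (w m (k + 2) / 2) * Polynomial.Chebyshev.U ℚ ((k : ℤ) + 1))
          + C (w m 1 / 2) * Polynomial.Chebyshev.U ℚ (0 : ℤ) := by
      rw [Finset.sum_range_succ' (fun k => C (w m k / 2) * Polynomial.Chebyshev.U ℚ ((k : ℤ) - 1)) m]
      have : C (w m 0 / 2) * Polynomial.Chebyshev.U ℚ ((0 : ℕ) - 1 : ℤ) = 0 := by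
        norm_num [Polynomial.Chebyshev.U_neg_one]
      rw [this, add_zero]
      have step1 : (∑ k ∈ Finset.range m, C (w m (k + 1) / 2) * Polynomial.Chebyshev.U ℚ (((k + 1 : ℕ) : ℤ) - 1))
          = ∑ k ∈ Finset.range m, C (w m (k + 1) / 2) * Polynomial.Chebyshev.U ℚ (k : ℤ) := by
        refine Finset.sum_congr rfl fun k _ => ?_
        norm_num
      rw [step1]
      -- extend to range (m+2)
      rw [Finset.sum_subset (Finset.range_subset_range.mpr (by omega : m ≤ m + 2)) (by
        intro k _ hk
        rw [Finset.mem_range, not_lt] at hk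
        rw [w_big (by omega), zero_div, map_zero, zero_mul])]
      rw [Finset.sum_range_succ' (fun k => C (w m (k + 1) / 2) * Polynomial.Chebyshev.U ℚ (k : ℤ)) (m + 1)]
      push_cast
      ring
    rw [hS2, ← add_assoc, ← Finset.sum_add_distrib]
    -- target side
    rw [Finset.sum_range_succ' (fun k => C (w (m + 1) k) * Polynomial.Chebyshev.U ℚ (k : ℤ)) (m + 1)]
    congr 1
    · refine Finset.sum_congr rfl fun k hk => ?_
      rw [Finset.mem_range] at hk
      rw [← add_mul, ← map_add, ← add_div, ← w_succ m k (by omega)]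
      push_cast
      ring
    · rw [w_zero_succ]
      push_cast
      ring

lemma key_scalar (n k : ℕ) (hk : k ≤ n) :
    ∑ m ∈ Finset.range (n + 1), (n.choose m : ℚ) * E0 (n - m) * w m k
      = (n ! : ℚ) * (((k : ℚ) + 1) / 2 ^ k *
          ∑ l ∈ (Finset.range (n - k + 1)).filter (fun l => Even l),
            E0 (n - k - l) /
              (2 ^ l * ((n - k - l)! : ℚ) * (((2 * k + l + 2) / 2)! : ℚ) * ((l / 2)! : ℚ))) := by
  classical
  rw [← Finset.sum_filter_of_ne (p := fun m => k ≤ m ∧ Even (m - k)) (by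
    intro m _ hne
    by_contra hmem
    exact hne (by rw [w_eq_zero hmem, mul_zero]))]
  rw [Finset.mul_sum, Finset.mul_sum]
  refine Finset.sum_nbij' (fun m => m - k) (fun l => k + l) ?_ ?_ ?_ ?_ ?_
  · intro m hm
    simp only [Finset.mem_filter, Finset.mem_range] at hm ⊢
    exact ⟨by omega, hm.2.2⟩
  · intro l hl
    simp only [Finset.mem_filter, Finset.mem_range] at hl ⊢
    exact ⟨by omega, by omega, by simpa using hl.2⟩
  · intro m hm
    simp only [Finset.mem_filter, Finset.mem_range] at hm
    omega
  · intro l hl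
    omega
  · intro m hm
    simp only [Finset.mem_filter, Finset.mem_range] at hm
    obtain ⟨hm1, hkm, b, hb⟩ := hm
    have hma : m = k + 2 * ((m - k) / 2) := by omega
    set a := (m - k) / 2 with ha
    have hdiv1 : (2 * k + (m - k) + 2) / 2 = k + a + 1 := by omega
    have hdiv2 : (m - k) / 2 = a := rfl
    have hnm : n - m = n - k - (m - k) := by omega
    rw [hnm, hdiv1]
    have hch : ((n.choose m : ℚ) * (m ! : ℚ)) * ((n - m)! : ℚ) = (n ! : ℚ) := by
      have := Nat.choose_mul_factorial_mul_factorial (show m ≤ n by omega)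
      exact_mod_cast congrArg (fun x : ℕ => (x : ℚ)) this
    have hw : w m k = (m ! : ℚ) * ((k : ℚ) + 1) / (2 ^ m * (a ! : ℚ) * ((k + a + 1)! : ℚ)) := by
      rw [hma, w_eq k a, ← hma]
    rw [hw]
    have hm2 : (2 : ℚ) ^ m = 2 ^ k * 2 ^ (m - k) := by
      rw [← pow_add]; congr 1; omega
    have p1 : ((n - m)! : ℚ) ≠ 0 := by positivity
    have p2 : (m ! : ℚ) ≠ 0 := by positivity
    have p3 : (a ! : ℚ) ≠ 0 := by positivity
    have p4 : ((k + a + 1)! : ℚ) ≠ 0 := by positivity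
    have p5 : (2 : ℚ) ^ k ≠ 0 := by positivity
    have p6 : (2 : ℚ) ^ (m - k) ≠ 0 := by positivity
    have hnm2 : n - m = n - k - (m - k) := hnm
    rw [hnm] at hch
    rw [hm2]
    field_simp
    linear_combination E0 (n - k - (m - k)) * hch

theorem stmt_9 (n : ℕ) :
    eulerPoly n =
      C (n ! : ℚ) *
        ∑ k ∈ Finset.range (n + 1),
          C (((k : ℚ) + 1) / 2 ^ k *
              ∑ l ∈ (Finset.range (n - k + 1)).filter (fun l => Even l),
                (eulerPoly (n - k - l)).eval 0 /
                  (2 ^ l * (n - k - l)! * ((2 * k + l + 2) / 2)! * (l / 2)!)) *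
            Polynomial.Chebyshev.U ℚ k := by
  rw [eulerPoly_eq_sum]
  have h1 : ∀ m ∈ Finset.range (n + 1), C ((n.choose m : ℚ) * E0 (n - m)) * X ^ m
      = ∑ k ∈ Finset.range (n + 1),
          C ((n.choose m : ℚ) * E0 (n - m) * w m k) * Polynomial.Chebyshev.U ℚ (k : ℤ) := by
    intro m hm
    rw [Finset.mem_range] at hm
    rw [xpow_eq, Finset.mul_sum,
      ← Finset.sum_subset (Finset.range_subset_range.mpr (show m + 1 ≤ n + 1 by omega)) (fun k _ hk => by
        rw [Finset.mem_range, not_lt] at hk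
        rw [w_big (by omega : m < k)]; simp)]
    exact Finset.sum_congr rfl fun k _ => by simp only [C_mul]; ring
  rw [Finset.sum_congr rfl h1, Finset.sum_comm, Finset.mul_sum]
  refine Finset.sum_congr rfl fun k hk => ?_
  rw [Finset.mem_range] at hk
  rw [← Finset.sum_mul, ← map_sum, key_scalar n k (by omega), C_mul, mul_assoc]
  simp only [E0]
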